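/- (IWAE gradient identity, finite case) Let Z be finite, q a fixed distribution on Z with full support, and π_θ(z), r_θ(z) differentiable positive functions of a parameter θ ∈ ℝ. For i.i.d. Z₁,…,Z_K ~ q and weights ρ_k = r_θ(Z_k)π_θ(Z_k)/q(Z_k), define normalized weights ρ̃_k = ρ_k / Σ_j ρ_j. Then d/dθ E[log((1/K)Σ_k ρ_k)] = E[Σ_{k=1}^K ρ̃_k · d/dθ log(r_θ(Z_k)π_θ(Z_k))]. -/

import Mathlib

/-- IWAE gradient identity (finite case): for a fixed full-support sampling
distribution `q` and positive differentiable families `π θ`, `r θ`, the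
derivative of the `K`-sample IWAE bound equals the expectation of the
self-normalized weighted sum of per-trace score gradients. -/
theorem iwae_gradient_identity {Z : Type*} [Fintype Z]
    (q : Z → ℝ) (hq0 : ∀ z, 0 < q z) (hq1 : ∑ z, q z = 1)
    (π r : ℝ → Z → ℝ)
    (hπpos : ∀ θ z, 0 < π θ z) (hrpos : ∀ θ z, 0 < r θ z)
    (hπdiff : ∀ z, Differentiable ℝ (fun θ => π θ z))
    (hrdiff : ∀ z, Differentiable ℝ (fun θ => r θ z))
    (K : ℕ) (hK : 1 ≤ K) (θ₀ : ℝ) :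
    deriv (fun θ => ∑ f : Fin K → Z, (∏ i, q (f i)) *
        Real.log ((1 / (K : ℝ)) * ∑ k, r θ (f k) * π θ (f k) / q (f k))) θ₀
      = ∑ f : Fin K → Z, (∏ i, q (f i)) *
          ∑ k : Fin K,
            ((r θ₀ (f k) * π θ₀ (f k) / q (f k)) /
                (∑ j, r θ₀ (f j) * π θ₀ (f j) / q (f j))) *
              deriv (fun θ => Real.log (r θ (f k) * π θ (f k))) θ₀ := by
  have hKpos : (0:ℝ) < (K:ℝ) := by exact_mod_cast hK
  have key : ∀ f : Fin K → Z,
      HasDerivAt (fun θ => Real.log ((1 / (K : ℝ)) * ∑ k, r θ (f k) * π θ (f k) / q (f k)))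
        (∑ k : Fin K,
            ((r θ₀ (f k) * π θ₀ (f k) / q (f k)) /
                (∑ j, r θ₀ (f j) * π θ₀ (f j) / q (f j))) *
              deriv (fun θ => Real.log (r θ (f k) * π θ (f k))) θ₀) θ₀ := by
    intro f
    have hrπ : ∀ k : Fin K, HasDerivAt (fun θ => r θ (f k) * π θ (f k))
        (deriv (fun θ => r θ (f k) * π θ (f k)) θ₀) θ₀ :=
      fun k => (((hrdiff (f k)).mul (hπdiff (f k))) θ₀).hasDerivAt
    have hw : ∀ k : Fin K, HasDerivAt (fun θ => r θ (f k) * π θ (f k) / q (f k))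
        (deriv (fun θ => r θ (f k) * π θ (f k)) θ₀ / q (f k)) θ₀ :=
      fun k => (hrπ k).div_const _
    have hS : HasDerivAt (fun θ => ∑ k, r θ (f k) * π θ (f k) / q (f k))
        (∑ k, deriv (fun θ => r θ (f k) * π θ (f k)) θ₀ / q (f k)) θ₀ :=
      HasDerivAt.fun_sum (fun k _ => hw k)
    have hSpos : 0 < ∑ j, r θ₀ (f j) * π θ₀ (f j) / q (f j) := by
      apply Finset.sum_pos
      · intro j _
        exact div_pos (mul_pos (hrpos θ₀ (f j)) (hπpos θ₀ (f j))) (hq0 (f j))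
      · exact Finset.univ_nonempty_iff.mpr ⟨⟨0, hK⟩⟩
    have hne : (1 / (K : ℝ)) * ∑ j, r θ₀ (f j) * π θ₀ (f j) / q (f j) ≠ 0 :=
      ne_of_gt (mul_pos (by positivity) hSpos)
    have hlog := ((hS.const_mul (1 / (K:ℝ))).log hne)
    convert hlog using 1
    rw [mul_div_mul_left _ _ (by positivity : (1/(K:ℝ)) ≠ 0), Finset.sum_div]
    apply Finset.sum_congr rfl
    intro k _
    have hrπk : r θ₀ (f k) * π θ₀ (f k) ≠ 0 :=
      ne_of_gt (mul_pos (hrpos θ₀ (f k)) (hπpos θ₀ (f k)))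
    rw [((hrπ k).log hrπk).deriv]
    have hqk := (hq0 (f k)).ne'
    have hrk := (hrpos θ₀ (f k)).ne'
    have hπk := (hπpos θ₀ (f k)).ne'
    field_simp
  have main : HasDerivAt (fun θ => ∑ f : Fin K → Z, (∏ i, q (f i)) *
        Real.log ((1 / (K : ℝ)) * ∑ k, r θ (f k) * π θ (f k) / q (f k)))
      (∑ f : Fin K → Z, (∏ i, q (f i)) *
          ∑ k : Fin K,
            ((r θ₀ (f k) * π θ₀ (f k) / q (f k)) /
                (∑ j, r θ₀ (f j) * π θ₀ (f j) / q (f j))) *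
              deriv (fun θ => Real.log (r θ (f k) * π θ (f k))) θ₀) θ₀ :=
    HasDerivAt.fun_sum (fun f _ => (key f).const_mul _)
  exact main.deriv
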